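/- arXiv:1401.1886 — 3 statements merged into one kernel-verified Lean document; each statement's English description precedes it below -/
import Mathlib

section
/- Let s₀ > 0 and let θ_L be a real number with |（s₀+1)θ_L| < π/2. Then for all θ ∈ (−π/2, π/2), cos^{s₀}(θ)·cos((s₀+1)θ_L − s₀θ) ≤ cos^{s₀+1}(θ_L), with equality if and only if θ = θ_L. -/
open Real Set

private lemma strictConcaveOn_log_cos :
    StrictConcaveOn ℝ (Ioo (-(π / 2)) (π / 2)) (fun x => Real.log (Real.cos x)) := by
  constructor
  · exact convex_Ioo _ _
  · intro x hx y hy hxy a b ha hb hab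
    have hcx : 0 < Real.cos x := Real.cos_pos_of_mem_Ioo hx
    have hcy : 0 < Real.cos y := Real.cos_pos_of_mem_Ioo hy
    have hcomb : 0 < a * Real.cos x + b * Real.cos y := by positivity
    have h1 : a * Real.log (Real.cos x) + b * Real.log (Real.cos y) ≤
        Real.log (a * Real.cos x + b * Real.cos y) := by
      have := strictConcaveOn_log_Ioi.concaveOn.2 (mem_Ioi.2 hcx) (mem_Ioi.2 hcy)
        ha.le hb.le hab
      simpa using this
    have h2 : a * Real.cos x + b * Real.cos y < Real.cos (a * x + b * y) := by
      have := strictConcaveOn_cos_Icc.2 (Ioo_subset_Icc_self hx) (Ioo_subset_Icc_self hy)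
        hxy ha hb hab
      simpa using this
    have h3 : Real.log (a * Real.cos x + b * Real.cos y) < Real.log (Real.cos (a * x + b * y)) :=
      Real.log_lt_log hcomb h2
    simpa [smul_eq_mul] using lt_of_le_of_lt h1 h3

private lemma key_lt (s x y : ℝ) (hs : 0 < s) (hx : x ∈ Ioo (-(π / 2)) (π / 2))
    (hy : y ∈ Ioo (-(π / 2)) (π / 2)) (hxy : x ≠ y) :
    Real.cos x ^ s * Real.cos y < Real.cos ((s * x + y) / (s + 1)) ^ (s + 1) := by
  have hs1 : (0 : ℝ) < s + 1 := by linarith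
  set a : ℝ := s / (s + 1) with ha_def
  set b : ℝ := 1 / (s + 1) with hb_def
  have ha : 0 < a := by positivity
  have hb : 0 < b := by positivity
  have hab : a + b = 1 := by rw [ha_def, hb_def]; field_simp
  have hcx : 0 < Real.cos x := Real.cos_pos_of_mem_Ioo hx
  have hcy : 0 < Real.cos y := Real.cos_pos_of_mem_Ioo hy
  have hkey := strictConcaveOn_log_cos.2 hx hy hxy ha hb hab
  simp only [smul_eq_mul] at hkey
  have hmem : a * x + b * y ∈ Ioo (-(π / 2)) (π / 2) :=
    (convex_Ioo _ _) hx hy ha.le hb.le hab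
  have hcm : 0 < Real.cos (a * x + b * y) := Real.cos_pos_of_mem_Ioo hmem
  have hmul : s * Real.log (Real.cos x) + Real.log (Real.cos y) <
      (s + 1) * Real.log (Real.cos (a * x + b * y)) := by
    have := mul_lt_mul_of_pos_left hkey hs1
    have e1 : (s + 1) * (a * Real.log (Real.cos x) + b * Real.log (Real.cos y))
        = s * Real.log (Real.cos x) + Real.log (Real.cos y) := by
      rw [ha_def, hb_def]; field_simp
    linarith [this, e1.symm.le]
  have heq : a * x + b * y = (s * x + y) / (s + 1) := by
    rw [ha_def, hb_def]; field_simp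
  rw [heq] at hmul hcm
  have lhs_eq : Real.cos x ^ s * Real.cos y =
      Real.exp (s * Real.log (Real.cos x) + Real.log (Real.cos y)) := by
    rw [Real.exp_add, Real.rpow_def_of_pos hcx, Real.exp_log hcy]; ring_nf
  have rhs_eq : Real.cos ((s * x + y) / (s + 1)) ^ (s + 1) =
      Real.exp ((s + 1) * Real.log (Real.cos ((s * x + y) / (s + 1)))) := by
    rw [Real.rpow_def_of_pos hcm, mul_comm]
  rw [lhs_eq, rhs_eq]
  exact Real.exp_lt_exp.2 hmul

private lemma key_le (s x y : ℝ) (hs : 0 < s) (hx : x ∈ Ioo (-(π / 2)) (π / 2))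
    (hy : y ∈ Ioo (-(π / 2)) (π / 2)) :
    Real.cos x ^ s * Real.cos y ≤ Real.cos ((s * x + y) / (s + 1)) ^ (s + 1) := by
  by_cases hxy : x = y
  · subst hxy
    have hcx : 0 < Real.cos x := Real.cos_pos_of_mem_Ioo hx
    have : (s * x + x) / (s + 1) = x := by field_simp
    rw [this, Real.rpow_add_one hcx.ne']
  · exact (key_lt s x y hs hx hy hxy).le

theorem saddle_point_inequality (s₀ θL : ℝ) (hs : 0 < s₀)
    (hθL : |(s₀ + 1) * θL| < Real.pi / 2) :
    ∀ θ ∈ Set.Ioo (-(Real.pi / 2)) (Real.pi / 2),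
      Real.cos θ ^ s₀ * Real.cos ((s₀ + 1) * θL - s₀ * θ) ≤ Real.cos θL ^ (s₀ + 1) ∧
      (Real.cos θ ^ s₀ * Real.cos ((s₀ + 1) * θL - s₀ * θ) = Real.cos θL ^ (s₀ + 1) ↔ θ = θL) := by
  intro θ hθ
  have hs1 : (0 : ℝ) < s₀ + 1 := by linarith
  have hpi : (0 : ℝ) < π := Real.pi_pos
  have habsθL : |θL| < π / 2 := by
    have h1 : |θL| ≤ (s₀ + 1) * |θL| := le_mul_of_one_le_left (abs_nonneg _) (by linarith)
    have h2 : (s₀ + 1) * |θL| = |(s₀ + 1) * θL| := by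
      rw [abs_mul, abs_of_pos hs1]
    linarith [h2 ▸ h1, hθL]
  have hθLmem : θL ∈ Ioo (-(π / 2)) (π / 2) := abs_lt.1 habsθL
  have hcθL : 0 < Real.cos θL := Real.cos_pos_of_mem_Ioo hθLmem
  have hcθ : 0 < Real.cos θ := Real.cos_pos_of_mem_Ioo hθ
  set φ : ℝ := (s₀ + 1) * θL - s₀ * θ with hφ_def
  -- strict inequality when θ ≠ θL
  have main_lt : θ ≠ θL → Real.cos θ ^ s₀ * Real.cos φ < Real.cos θL ^ (s₀ + 1) := by
    intro hne
    by_cases hφmem : φ ∈ Ioo (-(π / 2)) (π / 2)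
    · have hθφ : θ ≠ φ := by
        intro h
        apply hne
        have : (s₀ + 1) * θ = (s₀ + 1) * θL := by rw [hφ_def] at h; linarith
        exact mul_left_cancel₀ hs1.ne' this
      have := key_lt s₀ θ φ hs hθ hφmem hθφ
      have hm : (s₀ * θ + φ) / (s₀ + 1) = θL := by
        rw [hφ_def]; field_simp; ring
      rwa [hm] at this
    · by_cases hcφ : Real.cos φ ≤ 0
      · have h1 : Real.cos θ ^ s₀ * Real.cos φ ≤ 0 :=
          mul_nonpos_of_nonneg_of_nonpos (Real.rpow_nonneg hcθ.le _) hcφ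
        exact lt_of_le_of_lt h1 (Real.rpow_pos_of_pos hcθL _)
      · push_neg at hcφ
        set k : ℤ := round (φ / (2 * π)) with hk_def
        set φ' : ℝ := φ - k * (2 * π) with hφ'_def
        have hcosφ' : Real.cos φ' = Real.cos φ := by
          rw [hφ'_def]
          have := Real.cos_add_int_mul_two_pi φ (-k)
          simpa [sub_eq_add_neg] using this
        have habsφ' : |φ'| ≤ π := by
          have h1 : |φ / (2 * π) - (k : ℝ)| ≤ 1 / 2 := abs_sub_round _
          have h2 : φ' = (φ / (2 * π) - (k : ℝ)) * (2 * π) := by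
            rw [hφ'_def]; field_simp
          rw [h2, abs_mul, abs_of_pos (by linarith : (0:ℝ) < 2 * π)]
          nlinarith
        have hφ'mem : φ' ∈ Ioo (-(π / 2)) (π / 2) := by
          rw [mem_Ioo, ← abs_lt]
          by_contra hcon
          push_neg at hcon
          have : Real.cos |φ'| ≤ 0 :=
            Real.cos_nonpos_of_pi_div_two_le_of_le hcon (by linarith)
          rw [Real.cos_abs, hcosφ'] at this
          linarith
        have hk : k ≠ 0 := by
          intro h
          apply hφmem
          have : φ' = φ := by rw [hφ'_def, h]; push_cast; ring
          rwa [← this]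
        have hkabs : (2 : ℝ) * π ≤ |(k : ℝ) * (2 * π)| := by
          rw [abs_mul, abs_of_pos (by linarith : (0:ℝ) < 2 * π)]
          have : (1 : ℝ) ≤ |(k : ℝ)| := by
            rw [← Int.cast_abs]
            exact_mod_cast Int.one_le_abs hk
          nlinarith
        set θL' : ℝ := (s₀ * θ + φ') / (s₀ + 1) with hθL'_def
        have hθL'mem : θL' ∈ Ioo (-(π / 2)) (π / 2) := by
          rw [mem_Ioo, ← abs_lt]
          have h1 : |s₀ * θ + φ'| ≤ s₀ * |θ| + |φ'| := by
            calc |s₀ * θ + φ'| ≤ |s₀ * θ| + |φ'| := abs_add_le _ _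
            _ = s₀ * |θ| + |φ'| := by rw [abs_mul, abs_of_pos hs]
          have hθabs : |θ| < π / 2 := abs_lt.2 ⟨hθ.1, hθ.2⟩
          have hφ'abs : |φ'| < π / 2 := abs_lt.2 ⟨hφ'mem.1, hφ'mem.2⟩
          rw [hθL'_def, abs_div, abs_of_pos hs1, div_lt_iff₀ hs1]
          nlinarith
        have hcθL' : 0 < Real.cos θL' := Real.cos_pos_of_mem_Ioo hθL'mem
        have hθL'eq : θL' = ((s₀ + 1) * θL - (k : ℝ) * (2 * π)) / (s₀ + 1) := by
          rw [hθL'_def, hφ'_def, hφ_def]; ring_nf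
        have habs_lt : |θL| < |θL'| := by
          have h1 : |(k : ℝ) * (2 * π)| - |(s₀ + 1) * θL| ≤ |(s₀ + 1) * θL - (k : ℝ) * (2 * π)| := by
            have := abs_sub_abs_le_abs_sub ((k : ℝ) * (2 * π)) ((s₀ + 1) * θL)
            have h2 : |(k : ℝ) * (2 * π) - (s₀ + 1) * θL| = |(s₀ + 1) * θL - (k : ℝ) * (2 * π)| :=
              abs_sub_comm _ _
            linarith
          have h3 : |θL'| = |(s₀ + 1) * θL - (k : ℝ) * (2 * π)| / (s₀ + 1) := by
            rw [hθL'eq, abs_div, abs_of_pos hs1]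
          have h4 : |θL| = |(s₀ + 1) * θL| / (s₀ + 1) := by
            rw [abs_mul, abs_of_pos hs1]; field_simp
          rw [h3, h4, div_lt_div_iff₀ hs1 hs1]
          nlinarith
        have hcos_lt : Real.cos θL' < Real.cos θL := by
          have habs' : |θL'| ≤ π := by
            have := abs_lt.2 ⟨hθL'mem.1, hθL'mem.2⟩
            linarith
          have := Real.cos_lt_cos_of_nonneg_of_le_pi (abs_nonneg θL) habs' habs_lt
          rwa [Real.cos_abs, Real.cos_abs] at this
        have hkey := key_le s₀ θ φ' hs hθ hφ'mem
        rw [← hθL'_def] at hkey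
        have hfinal : Real.cos θL' ^ (s₀ + 1) < Real.cos θL ^ (s₀ + 1) :=
          Real.rpow_lt_rpow hcθL'.le hcos_lt hs1
        calc Real.cos θ ^ s₀ * Real.cos φ = Real.cos θ ^ s₀ * Real.cos φ' := by rw [hcosφ']
        _ ≤ Real.cos θL' ^ (s₀ + 1) := hkey
        _ < Real.cos θL ^ (s₀ + 1) := hfinal
  have eq_case : θ = θL → Real.cos θ ^ s₀ * Real.cos φ = Real.cos θL ^ (s₀ + 1) := by
    intro h
    subst h
    have hφθ : φ = θ := by rw [hφ_def]; ring
    rw [hφθ, Real.rpow_add_one hcθ.ne']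
  constructor
  · by_cases h : θ = θL
    · exact (eq_case h).le
    · exact (main_lt h).le
  · constructor
    · intro heq
      by_contra h
      exact absurd heq (main_lt h).ne
    · exact eq_case
end

section
/- For s₀ > 0, any complex Φ with Φ = |Φ|e^{i(s₀+1)θ_L}, (s₀+1)|θ_L| < π/2, and any real α > 0, n > 0, v: Re( Φ/(s₀(2πα − 2πiv)^{s₀}) + 2πn(α − iv) ) ≤ |Φ|/(s₀(2πα)^{s₀}) · cos^{s₀+1}(θ_L) + 2πnα. -/
open Real Complex



lemma jensen_core (s a b θ : ℝ) (hs : 0 < s) (ha : |a| < π/2) (hb : |b| < π/2)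
    (hθ : s * a + b = (s + 1) * θ) :
    Real.cos b * Real.cos a ^ s ≤ Real.cos θ ^ (s + 1) := by
  have hs1 : (0:ℝ) < s + 1 := by linarith
  have ha' := abs_lt.mp ha
  have hb' := abs_lt.mp hb
  have hca : 0 < Real.cos a := Real.cos_pos_of_mem_Ioo ⟨by linarith [ha'.1], ha'.2⟩
  have hcb : 0 < Real.cos b := Real.cos_pos_of_mem_Ioo ⟨by linarith [hb'.1], hb'.2⟩
  have hw₁ : (0:ℝ) ≤ s / (s + 1) := by positivity
  have hw₂ : (0:ℝ) ≤ 1 / (s + 1) := by positivity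
  have hsum : s / (s + 1) + 1 / (s + 1) = 1 := by field_simp
  have hθ' : θ = (s / (s + 1)) * a + (1 / (s + 1)) * b := by
    field_simp
    linarith
  have amgm : Real.cos a ^ (s / (s+1)) * Real.cos b ^ (1 / (s+1))
      ≤ (s / (s+1)) * Real.cos a + (1 / (s+1)) * Real.cos b :=
    Real.geom_mean_le_arith_mean2_weighted hw₁ hw₂ hca.le hcb.le hsum
  have hmem_a : a ∈ Set.Icc (-(π/2)) (π/2) := ⟨ha'.1.le, ha'.2.le⟩
  have hmem_b : b ∈ Set.Icc (-(π/2)) (π/2) := ⟨hb'.1.le, hb'.2.le⟩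
  have hconc := strictConcaveOn_cos_Icc.concaveOn.2 hmem_a hmem_b hw₁ hw₂ hsum
  simp only [smul_eq_mul] at hconc
  have key : Real.cos a ^ (s / (s+1)) * Real.cos b ^ (1 / (s+1)) ≤ Real.cos θ := by
    rw [hθ']; exact amgm.trans hconc
  have hgeom_pos : 0 < Real.cos a ^ (s / (s+1)) * Real.cos b ^ (1 / (s+1)) := by positivity
  have h := Real.rpow_le_rpow hgeom_pos.le key hs1.le
  rw [Real.mul_rpow (by positivity) (by positivity), ← Real.rpow_mul hca.le,
    ← Real.rpow_mul hcb.le] at h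
  have e1 : s / (s+1) * (s + 1) = s := by field_simp
  have e2 : 1 / (s+1) * (s + 1) = 1 := by field_simp
  rw [e1, e2, Real.rpow_one] at h
  linarith [h]

lemma core_ineq (s a b θ : ℝ) (hs : 0 < s) (ha : |a| < π/2) (hθ : (s + 1) * |θ| < π/2)
    (hb : s * a + b = (s + 1) * θ) :
    Real.cos b * Real.cos a ^ s ≤ Real.cos θ ^ (s + 1) := by
  have hπ := Real.pi_pos
  have hs1 : (0:ℝ) < s + 1 := by linarith
  have hθsmall : |θ| < π / (2 * (s + 1)) := by
    rw [lt_div_iff₀ (by positivity)]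
    nlinarith
  have hθlt : |θ| < π / 2 := by
    have h1 : (1:ℝ) ≤ s + 1 := by linarith
    calc |θ| ≤ (s+1) * |θ| := le_mul_of_one_le_left (abs_nonneg _) h1
      _ < π / 2 := hθ
  have hθ' := abs_lt.mp hθlt
  have hcθ : 0 < Real.cos θ := Real.cos_pos_of_mem_Ioo ⟨by linarith [hθ'.1], hθ'.2⟩
  have ha' := abs_lt.mp ha
  have hca : 0 < Real.cos a := Real.cos_pos_of_mem_Ioo ⟨by linarith [ha'.1], ha'.2⟩
  rcases le_or_gt (Real.cos b) 0 with hcb | hcb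
  · have h1 : Real.cos b * Real.cos a ^ s ≤ 0 :=
      mul_nonpos_of_nonpos_of_nonneg hcb (by positivity)
    have h2 : (0:ℝ) < Real.cos θ ^ (s + 1) := Real.rpow_pos_of_pos hcθ _
    linarith
  · set k : ℤ := round (b / (2 * π)) with hkdef
    set b' : ℝ := b - 2 * π * k with hb'def
    have hcb' : Real.cos b' = Real.cos b := by
      rw [hb'def, show b - 2 * π * (k:ℝ) = b + (-k:ℤ) * (2*π) by push_cast; ring,
        Real.cos_add_int_mul_two_pi]
    have hb'eq : b' = (b / (2*π) - k) * (2*π) := by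
      rw [hb'def]; field_simp
    have hb'abs : |b'| ≤ π := by
      rw [hb'eq, abs_mul, abs_of_pos (by positivity : (0:ℝ) < 2*π)]
      nlinarith [abs_sub_round (b / (2*π))]
    have hb'lt : |b'| < π / 2 := by
      by_contra hcon
      push_neg at hcon
      have : Real.cos |b'| ≤ 0 :=
        Real.cos_nonpos_of_pi_div_two_le_of_le hcon (by linarith)
      rw [Real.cos_abs, hcb'] at this
      linarith
    set θ' : ℝ := (s * a + b') / (s + 1) with hθ'def
    have hsum' : s * a + b' = (s + 1) * θ' := by
      rw [hθ'def]; field_simp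
    have hjen := jensen_core s a b' θ' hs ha hb'lt hsum'
    rw [hcb'] at hjen
    -- now show cos θ' ^ (s+1) ≤ cos θ ^ (s+1)
    have hθ'θ : θ' = θ - 2 * π * k / (s + 1) := by
      have : s * a + b - 2 * π * k = (s + 1) * θ - 2 * π * k := by rw [hb]
      rw [hθ'def, hb'def]
      field_simp
      linarith
    have hθ'abs : |θ'| < π / 2 := by
      have h1 : |s * a + b'| ≤ s * |a| + |b'| := by
        calc |s * a + b'| ≤ |s * a| + |b'| := abs_add_le _ _
          _ = s * |a| + |b'| := by rw [abs_mul, abs_of_pos hs]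
      rw [hθ'def, abs_div, abs_of_pos hs1, div_lt_iff₀ hs1]
      calc |s * a + b'| ≤ s * |a| + |b'| := h1
        _ < s * (π/2) + π/2 := by
            apply add_lt_add_of_le_of_lt _ hb'lt
            exact mul_le_mul_of_nonneg_left ha.le hs.le
        _ = π / 2 * (s + 1) := by ring
    have hcos_le : Real.cos θ' ≤ Real.cos θ := by
      rcases eq_or_ne k 0 with hk0 | hk0
      · rw [hθ'θ, hk0]; simp
      · have hk1 : (1:ℝ) ≤ |(k:ℝ)| := by
          rw [← Int.cast_abs]
          exact_mod_cast Int.one_le_abs hk0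
        have habs : 3 * π / (2 * (s+1)) ≤ |θ'| := by
          have h2 : |2 * π * k / (s + 1)| - |θ| ≤ |θ'| := by
            rw [hθ'θ]
            have := abs_sub_abs_le_abs_sub (2 * π * k / (s + 1)) θ
            rw [abs_sub_comm] at this
            linarith [this]
          have h3 : 2 * π / (s + 1) ≤ |2 * π * k / (s + 1)| := by
            rw [abs_div, abs_of_pos hs1, div_le_div_iff_of_pos_right hs1,
              abs_mul, abs_of_pos (by positivity : (0:ℝ) < 2*π)]
            nlinarith
          have h4 : |θ| ≤ π / (2 * (s+1)) := hθsmall.le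
          have : 2 * π / (s + 1) - π / (2 * (s+1)) = 3 * π / (2 * (s+1)) := by
            field_simp; ring
          linarith
        have hle : |θ| ≤ |θ'| := by
          have : π / (2 * (s+1)) ≤ 3 * π / (2 * (s+1)) := by
            apply div_le_div_of_nonneg_right _ (by positivity)
            linarith
          linarith
        calc Real.cos θ' = Real.cos |θ'| := (Real.cos_abs _).symm
          _ ≤ Real.cos |θ| := Real.cos_le_cos_of_nonneg_of_le_pi (abs_nonneg _)
              (by linarith [hθ'abs]) hle
          _ = Real.cos θ := Real.cos_abs _
    calc Real.cos b * Real.cos a ^ s ≤ Real.cos θ' ^ (s + 1) := hjen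
      _ ≤ Real.cos θ ^ (s + 1) := by
          apply Real.rpow_le_rpow _ hcos_le hs1.le
          have : 0 < Real.cos θ' := Real.cos_pos_of_mem_Ioo
            ⟨by linarith [(abs_lt.mp hθ'abs).1], (abs_lt.mp hθ'abs).2⟩
          linarith

theorem exponent_real_part_bound (s₀ θL α n v : ℝ) (hs : 0 < s₀) (hα : 0 < α) (hn : 0 < n)
    (Φ : ℂ) (hΦ : Φ = (‖Φ‖ : ℂ) * Complex.exp (Complex.I * ((s₀ + 1) * θL)))
    (hθL : (s₀ + 1) * |θL| < Real.pi / 2) :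
    (Φ / (s₀ * ((2 * Real.pi * α : ℂ) - 2 * Real.pi * Complex.I * v) ^ (s₀ : ℂ))
        + 2 * Real.pi * n * ((α : ℂ) - Complex.I * v)).re
      ≤ ‖Φ‖ / (s₀ * (2 * Real.pi * α) ^ s₀) * Real.cos θL ^ (s₀ + 1)
        + 2 * Real.pi * n * α := by
  have hπ := Real.pi_pos
  set w : ℂ := (2 * Real.pi * α : ℂ) - 2 * Real.pi * Complex.I * v with hwdef
  have hwre : w.re = 2 * Real.pi * α := by
    simp [hwdef]
  have hwrepos : 0 < w.re := by rw [hwre]; positivity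
  have hw0 : w ≠ 0 := fun h => by simp [h] at hwrepos
  have habsw : 0 < ‖w‖ := norm_pos_iff.mpr hw0
  set a : ℝ := Complex.arg w with hadef
  have haabs : |a| < π / 2 := Complex.abs_arg_lt_pi_div_two_iff.mpr (Or.inl hwrepos)
  -- cpow formula
  have hpow : w ^ (s₀ : ℂ) = ((‖w‖ ^ s₀ : ℝ) : ℂ) * Complex.exp (Complex.I * (s₀ * a)) := by
    rw [Complex.cpow_def_of_ne_zero hw0, Complex.log]
    rw [show (↑(Real.log (‖w‖)) + ↑(Complex.arg w) * Complex.I) * (s₀:ℂ)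
        = (↑(s₀ * Real.log (‖w‖)) : ℂ) + Complex.I * (s₀ * a) by push_cast; ring]
    rw [Complex.exp_add, ← Complex.ofReal_exp]
    congr 2
    rw [Real.rpow_def_of_pos habsw, mul_comm]
  set b : ℝ := (s₀ + 1) * θL - s₀ * a with hbdef
  obtain ⟨r, hr0, hrdef⟩ : ∃ r : ℝ, 0 ≤ r ∧ ‖Φ‖ = r := ⟨_, norm_nonneg Φ, rfl⟩
  rw [hrdef] at hΦ ⊢
  have hterm : Φ / (s₀ * w ^ (s₀ : ℂ))
      = ((r / (s₀ * ‖w‖ ^ s₀) : ℝ) : ℂ) * Complex.exp (Complex.I * b) := by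
    rw [hpow, hΦ]
    have hexp : Complex.exp (Complex.I * ((s₀ + 1) * θL))
        = Complex.exp (Complex.I * b) * Complex.exp (Complex.I * (s₀ * a)) := by
      rw [← Complex.exp_add]
      congr 1
      push_cast [hbdef]
      ring
    rw [hexp]
    have h1 : (s₀ : ℂ) ≠ 0 := by exact_mod_cast hs.ne'
    have h2 : ((‖w‖ ^ s₀ : ℝ) : ℂ) ≠ 0 := by
      exact_mod_cast (Real.rpow_pos_of_pos habsw s₀).ne'
    have h3 := Complex.exp_ne_zero (Complex.I * (s₀ * a))
    field_simp
    rw [Complex.ofReal_div, Complex.ofReal_mul]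
    field_simp
  have hre1 : (Φ / (s₀ * w ^ (s₀ : ℂ))).re
      = r / (s₀ * ‖w‖ ^ s₀) * Real.cos b := by
    rw [hterm, mul_comm Complex.I (b:ℂ)]
    rw [Complex.re_ofReal_mul, Complex.exp_ofReal_mul_I_re]
  have hre2 : ((2 * Real.pi * n : ℂ) * ((α : ℂ) - Complex.I * v)).re = 2 * Real.pi * n * α := by
    simp [Complex.mul_re, Complex.sub_re, Complex.I_re, Complex.I_im]
  -- 2πα = |w| * cos a
  have hcos_a : Real.cos a = 2 * Real.pi * α / ‖w‖ := by
    rw [hadef, Complex.cos_arg hw0, hwre]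
  have hca : 0 < Real.cos a := Real.cos_pos_of_mem_Ioo
    ⟨by linarith [(abs_lt.mp haabs).1], (abs_lt.mp haabs).2⟩
  have h2πα : 2 * Real.pi * α = ‖w‖ * Real.cos a := by
    rw [hcos_a]; field_simp
  have hrpow : (2 * Real.pi * α) ^ s₀ = ‖w‖ ^ s₀ * Real.cos a ^ s₀ := by
    rw [h2πα, Real.mul_rpow habsw.le hca.le]
  -- main inequality
  have hcore : Real.cos b * Real.cos a ^ s₀ ≤ Real.cos θL ^ (s₀ + 1) :=
    core_ineq s₀ a b θL hs haabs hθL (by rw [hbdef]; ring)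
  have hmain : r / (s₀ * ‖w‖ ^ s₀) * Real.cos b
      ≤ r / (s₀ * (2 * Real.pi * α) ^ s₀) * Real.cos θL ^ (s₀ + 1) := by
    rw [hrpow]
    rw [div_mul_eq_mul_div, div_mul_eq_mul_div, div_le_div_iff₀ (by positivity) (by positivity)]
    have key : r * (Real.cos b * Real.cos a ^ s₀) ≤ r * (Real.cos θL ^ (s₀ + 1)) :=
      mul_le_mul_of_nonneg_left hcore hr0
    nlinarith [mul_le_mul_of_nonneg_left key
      (by positivity : (0:ℝ) ≤ s₀ * ‖w‖ ^ s₀)]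
  calc (Φ / (s₀ * w ^ (s₀ : ℂ)) + 2 * Real.pi * n * ((α : ℂ) - Complex.I * v)).re
      = r / (s₀ * ‖w‖ ^ s₀) * Real.cos b + 2 * Real.pi * n * α := by
        rw [Complex.add_re, hre1]
        rw [show ((2:ℂ) * Real.pi * n * ((α : ℂ) - Complex.I * v))
            = ((2 * Real.pi * n : ℂ) * ((α : ℂ) - Complex.I * v)) by push_cast; ring, hre2]
    _ ≤ _ := by linarith [hmain]
end

section
/- Let a : ℕ → ℂ be periodic with period j and bounded by M. Then the Dirichlet series D(s) = ∑_{m=1}^∞ a(m)/m^s, which converges for Re s > 1, extends to a meromorphic function on ℂ with at most a simple pole at s = 1, whose residue equals (1/j)∑_{r=1}^{j} a(r). -/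
theorem periodic_dirichlet_meromorphic (j : ℕ) (hj : 0 < j) (M : ℝ) (a : ℕ → ℂ)
    (hper : ∀ m : ℕ, a (m + j) = a m) (hbd : ∀ m, ‖a m‖ ≤ M) :
    ∃ F : ℂ → ℂ,
      (∀ s : ℂ, 1 < s.re → F s = ∑' m : ℕ, a (m + 1) / ((m : ℂ) + 1) ^ s) ∧
      AnalyticOnNhd ℂ F {(1 : ℂ)}ᶜ ∧
      Filter.Tendsto (fun s => (s - 1) * F s) (nhdsWithin 1 {(1 : ℂ)}ᶜ)
        (nhds ((1 / (j : ℂ)) * ∑ r ∈ Finset.Icc 1 j, a r)) := by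
  haveI : NeZero j := ⟨hj.ne'⟩
  have hperiodic : Function.Periodic a j := hper
  have hmod : ∀ m : ℕ, a (m % j) = a m := fun m ↦ hperiodic.map_mod_nat m
  set Φ : ZMod j → ℂ := fun n ↦ a n.val with hΦ
  have hΦcast : ∀ m : ℕ, Φ (m : ZMod j) = a m := by
    intro m
    simp only [hΦ, ZMod.val_natCast]
    exact hmod m
  refine ⟨ZMod.LFunction Φ, ?_, ?_, ?_⟩
  · intro s hs
    rw [ZMod.LFunction_eq_LSeries Φ hs, LSeries,
      Summable.tsum_eq_zero_add (ZMod.LSeriesSummable_of_one_lt_re Φ hs), LSeries.term_zero, zero_add]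
    congr 1 with m
    rw [LSeries.term_of_ne_zero (Nat.succ_ne_zero m), hΦcast]
    push_cast
    ring
  · have hdiff : DifferentiableOn ℂ (ZMod.LFunction Φ) {(1 : ℂ)}ᶜ := fun s hs ↦
      (ZMod.differentiableAt_LFunction Φ s (Or.inl hs)).differentiableWithinAt
    exact hdiff.analyticOnNhd isOpen_compl_singleton
  · have h := ZMod.LFunction_residue_one Φ
    have hsum : ∑ n : ZMod j, Φ n = ∑ r ∈ Finset.Icc 1 j, a r := by
      obtain ⟨k, rfl⟩ : ∃ k, j = k + 1 := ⟨j - 1, (Nat.succ_pred_eq_of_pos hj).symm⟩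
      have h1 : ∑ n : ZMod (k + 1), Φ n = ∑ r ∈ Finset.range (k + 1), a r :=
        Fin.sum_univ_eq_sum_range (fun r ↦ a r) (k + 1)
      have h2 : ∑ r ∈ Finset.Icc 1 (k + 1), a r = ∑ i ∈ Finset.range (k + 1), a (1 + i) := by
        rw [← Finset.Ico_add_one_right_eq_Icc, Finset.sum_Ico_eq_sum_range]
        norm_num
      rw [h1, h2, Finset.sum_range_succ' (fun r ↦ a r) k, Finset.sum_range_succ]
      have : a (1 + k) = a 0 := by rw [add_comm 1 k, ← zero_add (k + 1), hper 0]
      rw [this]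
      congr 1
      exact Finset.sum_congr rfl fun i _ ↦ by rw [add_comm 1 i]
    have heq : (1 / (j : ℂ)) * ∑ r ∈ Finset.Icc 1 j, a r = ∑ n : ZMod j, Φ n / (j : ℂ) := by
      rw [← Finset.sum_div, hsum]; ring
    rw [heq]
    exact h
end
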